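/- arXiv:1502.04431 — 3 statements merged into one kernel-verified Lean document; each statement's English description precedes it below -/
import Mathlib

section
/- Suppose v(x) = x^{−α}·l(x) for some α > 2 and a function l slowly varying at infinity. Then for every c > 0, ∫_b^∞ v(t)·exp(−c·b²/t) dt = O(b²·v(b²)) as b → ∞. -/
open Filter MeasureTheory Real


lemma aux_exp_neg_le (n : ℕ) {y : ℝ} (hy : 0 < y) :
    Real.exp (-y) ≤ (n.factorial : ℝ) / y ^ n := by
  have h1 : y ^ n / (n.factorial : ℝ) ≤ Real.exp y := by
    refine le_trans ?_ (Real.sum_le_exp_of_nonneg hy.le (n + 1))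
    exact Finset.single_le_sum (f := fun i => y ^ i / (i.factorial : ℝ))
      (fun i _ => by positivity) (Finset.self_mem_range_succ n)
  have h2 : (0:ℝ) < y ^ n / (n.factorial : ℝ) := by positivity
  rw [Real.exp_neg]
  calc (Real.exp y)⁻¹ ≤ (y ^ n / (n.factorial : ℝ))⁻¹ := by
        exact inv_anti₀ h2 h1
    _ = (n.factorial : ℝ) / y ^ n := by rw [inv_div]


lemma aux_tail_small (l L : ℝ → ℝ) (hl_pos : ∀ x > 0, 0 < l x)
    (hl_slow : ∀ t > 0, Tendsto (fun x => l (t * x) / l x) atTop (nhds 1))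
    (hmeas : Measurable L) {b₁ : ℝ} (hb₁ : 0 < b₁)
    (N : Set ℝ) (hN : volume N = 0) (hNgood : ∀ t, t ∉ N → b₁ < t → l t = L t)
    (z : ℕ → ℝ) (hz : ∀ m, b₁ < z m) (hzT : Tendsto z atTop atTop) (hi : ℝ) :
    ∀ᶠ m in atTop, volume (⋃ k, ⋃ (_ : m ≤ k), Set.Icc (1:ℝ) hi ∩
      (fun u => L (u * z k)) ⁻¹' (Set.Icc (5/7 * l (z k)) (7/5 * l (z k)))ᶜ)
      < ENNReal.ofReal (1/5) := by
  set T : ℕ → Set ℝ := fun k => Set.Icc (1:ℝ) hi ∩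
      (fun u => L (u * z k)) ⁻¹' (Set.Icc (5/7 * l (z k)) (7/5 * l (z k)))ᶜ with hT
  set A : ℕ → Set ℝ := fun m => ⋃ k, ⋃ (_ : m ≤ k), T k with hA
  have hTmeas : ∀ k, MeasurableSet (T k) := fun k =>
    measurableSet_Icc.inter ((hmeas.comp (measurable_mul_const (z k))) measurableSet_Icc.compl)
  have hAmeas : ∀ m, MeasurableSet (A m) := fun m =>
    MeasurableSet.iUnion fun k => MeasurableSet.iUnion fun _ => hTmeas k
  have hanti : Antitone A := by
    intro m m' hmm' u hu
    simp only [hA, Set.mem_iUnion] at hu ⊢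
    obtain ⟨k, hk, hu⟩ := hu
    exact ⟨k, hmm'.trans hk, hu⟩
  have hfin : volume (A 0) ≠ ⊤ := by
    have hsub : A 0 ⊆ Set.Icc (1:ℝ) hi :=
      Set.iUnion₂_subset fun k _ => Set.inter_subset_left
    exact ((measure_mono hsub).trans_lt (by rw [Real.volume_Icc]; exact ENNReal.ofReal_lt_top)).ne
  have hzpos : ∀ k, 0 < z k := fun k => hb₁.trans (hz k)
  have hinter : ⋂ m, A m ⊆ ⋃ k, (· * z k) ⁻¹' N := by
    intro u hu
    by_contra hz'
    simp only [Set.mem_iUnion, Set.mem_preimage, not_exists] at hz'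
    have hu0 : 1 ≤ u := by
      have h0 := Set.mem_iInter.mp hu 0
      simp only [hA, Set.mem_iUnion] at h0
      obtain ⟨k, _, hk⟩ := h0
      exact hk.1.1
    have hconv : Tendsto (fun k => l (u * z k) / l (z k)) atTop (nhds 1) :=
      (hl_slow u (by linarith)).comp hzT
    have h1 := hconv.eventually_lt_const (show (1:ℝ) < 5/4 by norm_num)
    have h2 := hconv.eventually_const_lt (show (3:ℝ)/4 < 1 by norm_num)
    rcases eventually_atTop.mp (h1.and h2) with ⟨m, hm⟩
    have hAm := Set.mem_iInter.mp hu m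
    simp only [hA, Set.mem_iUnion] at hAm
    obtain ⟨k, hkm, hTk⟩ := hAm
    have hlz : 0 < l (z k) := hl_pos _ (hzpos k)
    have hbuz : b₁ < u * z k :=
      lt_of_lt_of_le (hz k) (le_mul_of_one_le_left (hzpos k).le hu0)
    have heqk : l (u * z k) = L (u * z k) := hNgood _ (hz' k) hbuz
    obtain ⟨hr1, hr2⟩ := hm k hkm
    rw [div_lt_iff₀ hlz] at hr1
    rw [lt_div_iff₀ hlz] at hr2
    have : L (u * z k) ∈ Set.Icc (5/7 * l (z k)) (7/5 * l (z k)) := by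
      rw [← heqk]
      constructor
      · nlinarith
      · nlinarith
    exact hTk.2 this
  have hZ : volume (⋃ k, (· * z k) ⁻¹' N) = 0 := by
    refine measure_iUnion_null fun k => ?_
    rw [Real.volume_preimage_mul_right (ne_of_gt (hzpos k)), hN, mul_zero]
  have h0 : volume (⋂ m, A m) = 0 :=
    le_antisymm ((measure_mono hinter).trans hZ.le) zero_le
  have htend : Tendsto (fun m => volume (A m)) atTop (nhds 0) := by
    have := tendsto_measure_iInter_atTop (fun m => (hAmeas m).nullMeasurableSet) hanti ⟨0, hfin⟩
    rwa [h0] at this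
  exact htend.eventually_lt_const (ENNReal.ofReal_pos.mpr (by norm_num))

lemma aux_window (l : ℝ → ℝ) (hl_pos : ∀ x > 0, 0 < l x)
    (hl_slow : ∀ t > 0, Tendsto (fun x => l (t * x) / l x) atTop (nhds 1))
    {b₁ : ℝ} (hb₁ : 0 < b₁) (hm : AEMeasurable l (volume.restrict (Set.Ioi b₁))) :
    ∃ X, b₁ + 1 ≤ X ∧ ∀ x, X ≤ x → ∀ s, 1 ≤ s → s ≤ 2 →
      l (s * x) ≤ 2 * l x ∧ l x ≤ 2 * l (s * x) := by
  by_contra hcon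
  push_neg at hcon
  have hseq : ∀ m : ℕ, ∃ x, b₁ + 1 + m ≤ x ∧ ∃ s, 1 ≤ s ∧ s ≤ 2 ∧
      ¬(l (s * x) ≤ 2 * l x ∧ l x ≤ 2 * l (s * x)) := by
    intro m
    obtain ⟨x, hx, s, hs1, hs2, hbad⟩ := hcon (b₁ + 1 + m)
      (by have : (0:ℝ) ≤ (m:ℕ) := Nat.cast_nonneg m; linarith)
    exact ⟨x, hx, s, hs1, hs2, fun h => absurd h.2 (not_le.mpr (hbad h.1))⟩
  choose x hxge s hs1 hs2 hbad using hseq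
  have hx_gt : ∀ m, b₁ < x m := fun m => by
    have h := hxge m; have : (0:ℝ) ≤ (m:ℕ) := Nat.cast_nonneg m; linarith
  have hx_pos : ∀ m, 0 < x m := fun m => hb₁.trans (hx_gt m)
  have hxT : Tendsto x atTop atTop := by
    apply tendsto_atTop_mono (fun m => ?_) tendsto_natCast_atTop_atTop
    have := hxge m; linarith
  set y : ℕ → ℝ := fun k => s k * x k with hy
  have hy_ge : ∀ m, x m ≤ y m := fun m => le_mul_of_one_le_left (hx_pos m).le (hs1 m)
  have hy_gt : ∀ m, b₁ < y m := fun m => lt_of_lt_of_le (hx_gt m) (hy_ge m)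
  have hy_pos : ∀ m, 0 < y m := fun m => hb₁.trans (hy_gt m)
  have hyT : Tendsto y atTop atTop := tendsto_atTop_mono hy_ge hxT
  -- measurable version
  set L : ℝ → ℝ := hm.mk l with hL
  have hmeas : Measurable L := hm.measurable_mk
  have hae : ∀ᵐ t : ℝ, t ∈ Set.Ioi b₁ → l t = L t :=
    (ae_restrict_iff' measurableSet_Ioi).mp hm.ae_eq_mk
  set N : Set ℝ := {t : ℝ | ¬ (t ∈ Set.Ioi b₁ → l t = L t)} with hNdef
  have hN : volume N = 0 := by rw [ae_iff] at hae; exact hae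
  have hNgood : ∀ t, t ∉ N → b₁ < t → l t = L t := by
    intro t ht hbt
    simp only [hNdef, Set.mem_setOf_eq, not_not] at ht
    exact ht hbt
  have evS := aux_tail_small l L hl_pos hl_slow hmeas hb₁ N hN hNgood x hx_gt hxT 4
  have evT := aux_tail_small l L hl_pos hl_slow hmeas hb₁ N hN hNgood y hy_gt hyT 2
  obtain ⟨m, hmS, hmT⟩ := (evS.and evT).exists
  set Stail : Set ℝ := ⋃ k, ⋃ (_ : m ≤ k), Set.Icc (1:ℝ) 4 ∩
      (fun u => L (u * x k)) ⁻¹' (Set.Icc (5/7 * l (x k)) (7/5 * l (x k)))ᶜ with hStail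
  set Ttail : Set ℝ := ⋃ k, ⋃ (_ : m ≤ k), Set.Icc (1:ℝ) 2 ∩
      (fun u => L (u * y k)) ⁻¹' (Set.Icc (5/7 * l (y k)) (7/5 * l (y k)))ᶜ with hTtail
  have hsm0 : (0:ℝ) < s m := lt_of_lt_of_le one_pos (hs1 m)
  -- find good point u
  set U : Set ℝ := Stail ∪ (fun u => u / s m) ⁻¹' Ttail with hU
  have hvolU : volume U ≤ ENNReal.ofReal (3/5) := by
    refine (measure_union_le _ _).trans ?_
    have hpre : (fun u => u / s m) ⁻¹' Ttail = (· * (s m)⁻¹) ⁻¹' Ttail := by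
      simp only [div_eq_mul_inv]
    have h2 : volume ((fun u => u / s m) ⁻¹' Ttail) ≤ ENNReal.ofReal 2 * ENNReal.ofReal (1/5) := by
      rw [hpre, Real.volume_preimage_mul_right (inv_ne_zero hsm0.ne'), inv_inv,
        abs_of_pos hsm0]
      exact mul_le_mul' (ENNReal.ofReal_le_ofReal (hs2 m)) hmT.le
    calc volume Stail + volume ((fun u => u / s m) ⁻¹' Ttail)
        ≤ ENNReal.ofReal (1/5) + ENNReal.ofReal 2 * ENNReal.ofReal (1/5) :=
          add_le_add hmS.le h2
      _ = ENNReal.ofReal (3/5) := by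
          rw [← ENNReal.ofReal_mul (by norm_num), ← ENNReal.ofReal_add (by norm_num) (by norm_num)]
          norm_num
  have hJU : ¬ (Set.Icc (s m) (2 * s m) ⊆ U) := by
    intro hsub
    have h1 := (measure_mono hsub).trans hvolU
    rw [Real.volume_Icc, ENNReal.ofReal_le_ofReal_iff (by norm_num)] at h1
    linarith [hs1 m]
  obtain ⟨u, huJ, huU⟩ := Set.not_subset.mp hJU
  have huS : u ∉ Stail := fun h => huU (Set.mem_union_left _ h)
  have huT : u / s m ∉ Ttail := fun h => huU (Set.mem_union_right _ h)
  have hu14 : u ∈ Set.Icc (1:ℝ) 4 :=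
    ⟨le_trans (hs1 m) huJ.1, le_trans huJ.2 (by linarith [hs2 m])⟩
  have hw12 : u / s m ∈ Set.Icc (1:ℝ) 2 :=
    ⟨(one_le_div hsm0).mpr huJ.1, (div_le_iff₀ hsm0).mpr (by linarith [huJ.2])⟩
  have hSm : L (u * x m) ∈ Set.Icc (5/7 * l (x m)) (7/5 * l (x m)) := by
    by_contra hc
    exact huS (Set.mem_iUnion.mpr ⟨m, Set.mem_iUnion.mpr ⟨le_rfl, ⟨hu14, hc⟩⟩⟩)
  have hTm : L ((u / s m) * y m) ∈ Set.Icc (5/7 * l (y m)) (7/5 * l (y m)) := by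
    by_contra hc
    exact huT (Set.mem_iUnion.mpr ⟨m, Set.mem_iUnion.mpr ⟨le_rfl, ⟨hw12, hc⟩⟩⟩)
  have hid : (u / s m) * y m = u * x m := by
    rw [hy]; field_simp
  rw [hid] at hTm
  have hlx : 0 < l (x m) := hl_pos _ (hx_pos m)
  have hly : 0 < l (y m) := hl_pos _ (hy_pos m)
  obtain ⟨hS1, hS2⟩ := hSm
  obtain ⟨hT1, hT2⟩ := hTm
  refine hbad m ⟨?_, ?_⟩
  · show l (s m * x m) ≤ 2 * l (x m)
    nlinarith
  · show l (x m) ≤ 2 * l (s m * x m)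
    nlinarith


lemma aux_chain_up (l : ℝ → ℝ) {X : ℝ} (hX : 0 < X)
    (W : ∀ x, X ≤ x → ∀ s, 1 ≤ s → s ≤ 2 → l (s * x) ≤ 2 * l x ∧ l x ≤ 2 * l (s * x))
    {x : ℝ} (hx : X ≤ x) (hlx : 0 ≤ l x) : ∀ t, x ≤ t → l t ≤ 2 * (t / x) * l x := by
  have hx0 : 0 < x := lt_of_lt_of_le hX hx
  have key : ∀ k : ℕ, ∀ t, 2 ^ k * x ≤ t → t ≤ 2 ^ (k+1) * x → l t ≤ 2 ^ (k+1) * l x := by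
    intro k
    induction k with
    | zero =>
      intro t h1 h2
      have h1' : x ≤ t := by simpa using h1
      have hs1 : 1 ≤ t / x := (one_le_div hx0).mpr h1'
      have hs2 : t / x ≤ 2 := by
        rw [div_le_iff₀ hx0]; rw [pow_one] at h2; linarith
      have hW := (W x hx (t / x) hs1 hs2).1
      rw [div_mul_cancel₀ _ (ne_of_gt hx0)] at hW
      calc l t ≤ 2 * l x := hW
        _ = 2 ^ (0+1) * l x := by norm_num
    | succ k ih =>
      intro t h1 h2
      rw [pow_succ] at h1
      rw [pow_succ (2:ℝ) (k+1)] at h2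
      have h1' : 2 ^ k * x ≤ t / 2 := by rw [le_div_iff₀ (by norm_num : (0:ℝ) < 2)]; nlinarith
      have h2' : t / 2 ≤ 2 ^ (k+1) * x := by
        rw [div_le_iff₀ (by norm_num : (0:ℝ) < 2)]; nlinarith
      have iht := ih (t / 2) h1' h2'
      have hpk : (1:ℝ) ≤ 2 ^ k := one_le_pow₀ (by norm_num)
      have hXt2 : X ≤ t / 2 := by
        refine le_trans hx (le_trans ?_ h1')
        nlinarith
      have hW := (W (t / 2) hXt2 2 one_le_two le_rfl).1
      have h2t : 2 * (t / 2) = t := by ring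
      rw [h2t] at hW
      calc l t ≤ 2 * l (t / 2) := hW
        _ ≤ 2 * (2 ^ (k+1) * l x) := by linarith
        _ = 2 ^ (k+1+1) * l x := by ring
  intro t ht
  have hex : ∃ j : ℕ, t < 2 ^ (j+1) * x := by
    obtain ⟨j, hj⟩ := pow_unbounded_of_one_lt (t / x) (one_lt_two (α := ℝ))
    refine ⟨j, ?_⟩
    have h1 : t < 2 ^ j * x := by rw [← div_lt_iff₀ hx0]; exact hj
    have h2 : (2:ℝ) ^ j * x ≤ 2 ^ (j+1) * x := by
      rw [pow_succ]; nlinarith [pow_pos (by norm_num : (0:ℝ) < 2) j]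
    linarith
  classical
  set k := Nat.find hex with hk
  have hspec : t < 2 ^ (k+1) * x := Nat.find_spec hex
  have hlow : 2 ^ k * x ≤ t := by
    rcases Nat.eq_zero_or_pos k with h0 | hpos
    · rw [h0]; simpa using ht
    · obtain ⟨j', hj'⟩ := Nat.exists_eq_succ_of_ne_zero hpos.ne'
      have hmin := Nat.find_min hex (by rw [← hk, hj']; exact Nat.lt_succ_self j')
      rw [hj']
      exact not_lt.mp hmin
  have h2k : (2:ℝ) ^ k ≤ t / x := (le_div_iff₀ hx0).mpr hlow
  calc l t ≤ 2 ^ (k+1) * l x := key k t hlow hspec.le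
    _ = 2 * 2 ^ k * l x := by ring
    _ ≤ 2 * (t / x) * l x := by nlinarith [mul_nonneg (sub_nonneg.mpr h2k) hlx]

lemma aux_chain_down (l : ℝ → ℝ) {X : ℝ} (hX : 0 < X)
    (W : ∀ x, X ≤ x → ∀ s, 1 ≤ s → s ≤ 2 → l (s * x) ≤ 2 * l x ∧ l x ≤ 2 * l (s * x))
    {x : ℝ} (hlx : 0 ≤ l x) : ∀ t, X ≤ t → t ≤ x → l t ≤ 2 * (x / t) * l x := by
  have key : ∀ k : ℕ, ∀ t, X ≤ t → 2 ^ k * t ≤ x → x ≤ 2 ^ (k+1) * t → l t ≤ 2 ^ (k+1) * l x := by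
    intro k
    induction k with
    | zero =>
      intro t ht h1 h2
      have ht0 : 0 < t := lt_of_lt_of_le hX ht
      have h1' : t ≤ x := by simpa using h1
      have hs1 : 1 ≤ x / t := (one_le_div ht0).mpr h1'
      have hs2 : x / t ≤ 2 := by
        rw [div_le_iff₀ ht0]; rw [pow_one] at h2; linarith
      have hW := (W t ht (x / t) hs1 hs2).2
      rw [div_mul_cancel₀ _ (ne_of_gt ht0)] at hW
      calc l t ≤ 2 * l x := hW
        _ = 2 ^ (0+1) * l x := by norm_num
    | succ k ih =>
      intro t ht h1 h2
      have ht0 : 0 < t := lt_of_lt_of_le hX ht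
      rw [pow_succ] at h1
      rw [pow_succ (2:ℝ) (k+1)] at h2
      have hX2t : X ≤ 2 * t := by linarith
      have h1' : 2 ^ k * (2 * t) ≤ x := by nlinarith
      have h2' : x ≤ 2 ^ (k+1) * (2 * t) := by nlinarith [h2]
      have iht := ih (2 * t) hX2t h1' h2'
      have hW := (W t ht 2 one_le_two le_rfl).2
      calc l t ≤ 2 * l (2 * t) := hW
        _ ≤ 2 * (2 ^ (k+1) * l x) := by linarith
        _ = 2 ^ (k+1+1) * l x := by ring
  intro t ht htx
  have ht0 : 0 < t := lt_of_lt_of_le hX ht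
  have hex : ∃ j : ℕ, x < 2 ^ (j+1) * t := by
    obtain ⟨j, hj⟩ := pow_unbounded_of_one_lt (x / t) (one_lt_two (α := ℝ))
    refine ⟨j, ?_⟩
    have h1 : x < 2 ^ j * t := by rw [← div_lt_iff₀ ht0]; exact hj
    have h2 : (2:ℝ) ^ j * t ≤ 2 ^ (j+1) * t := by
      rw [pow_succ]; nlinarith [pow_pos (by norm_num : (0:ℝ) < 2) j]
    linarith
  classical
  set k := Nat.find hex with hk
  have hspec : x < 2 ^ (k+1) * t := Nat.find_spec hex
  have hlow : 2 ^ k * t ≤ x := by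
    rcases Nat.eq_zero_or_pos k with h0 | hpos
    · rw [h0]; simpa using htx
    · obtain ⟨j', hj'⟩ := Nat.exists_eq_succ_of_ne_zero hpos.ne'
      have hmin := Nat.find_min hex (by rw [← hk, hj']; exact Nat.lt_succ_self j')
      rw [hj']
      exact not_lt.mp hmin
  have h2k : (2:ℝ) ^ k ≤ x / t := (le_div_iff₀ ht0).mpr hlow
  calc l t ≤ 2 ^ (k+1) * l x := key k t ht hlow hspec.le
    _ = 2 * 2 ^ k * l x := by ring
    _ ≤ 2 * (x / t) * l x := by nlinarith [mul_nonneg (sub_nonneg.mpr h2k) hlx]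


/-- If `v(x) = x^{−α} l(x)` with `α > 2` and `l` slowly varying at infinity, then
for every `c > 0`, `∫_b^∞ v(t)·exp(−c b²/t) dt = O(b²·v(b²))` as `b → ∞`. -/
theorem stmt3 (α : ℝ) (hα : 2 < α) (l : ℝ → ℝ) (hl_pos : ∀ x > 0, 0 < l x)
    (hl_slow : ∀ t > 0, Tendsto (fun x => l (t * x) / l x) atTop (nhds 1))
    (v : ℝ → ℝ) (hv : ∀ x, v x = x ^ (-α) * l x) (c : ℝ) (hc : 0 < c) :
    ∃ C > 0, ∃ b₀ > 0, ∀ b > b₀,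
      ∫ t in Set.Ioi b, v t * Real.exp (-c * b ^ 2 / t) ≤ C * b ^ 2 * v (b ^ 2) := by
  by_cases H : ∃ b₁ > 0, AEMeasurable l (volume.restrict (Set.Ioi b₁))
  · obtain ⟨b₁, hb₁, hmAE⟩ := H
    obtain ⟨X, hXb, hW⟩ := aux_window l hl_pos hl_slow hb₁ hmAE
    have hX0 : 0 < X := by linarith
    set n : ℕ := ⌈α⌉₊ + 2 with hn
    have hnα : α + 1 ≤ (n : ℝ) := by
      have := Nat.le_ceil α
      rw [hn]; push_cast; linarith
    set C : ℝ := 2 / (α - 2) + 2 * (n.factorial : ℝ) / c ^ n with hC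
    have hCpos : 0 < C := by
      apply add_pos (div_pos two_pos (by linarith))
      apply div_pos (by positivity) (by positivity)
    refine ⟨C, hCpos, X + 2, by linarith, fun b hb => ?_⟩
    have hb1 : 1 < b := by linarith
    have hb0 : (0:ℝ) < b := by linarith
    have hbX : X < b := by linarith
    have hbb2 : b < b ^ 2 := by nlinarith
    have hb20 : (0:ℝ) < b ^ 2 := by positivity
    have hXb2 : X ≤ b ^ 2 := by linarith
    have hlb2 : 0 < l (b ^ 2) := hl_pos _ hb20
    set A1 : ℝ := 2 * l (b ^ 2) / b ^ 2 with hA1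
    have hA1pos : 0 < A1 := by positivity
    set A2 : ℝ := 2 * l (b ^ 2) * b ^ 2 * (n.factorial : ℝ) / (c ^ n * (b ^ 2) ^ n) with hA2
    have hA2pos : 0 < A2 := by positivity
    set g : ℝ → ℝ := fun t => (Set.Ioi (b ^ 2)).indicator (fun t => A1 * t ^ (1 - α)) t
      + (Set.Ioc b (b ^ 2)).indicator (fun t => A2 * t ^ ((n:ℝ) - α - 1)) t with hg
    have hup := aux_chain_up l hX0 hW hXb2 hlb2.le
    have hdown := aux_chain_down l hX0 hW (x := b ^ 2) hlb2.le
    -- pointwise domination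
    have hfg : ∀ t ∈ Set.Ioi b, v t * Real.exp (-c * b ^ 2 / t) ≤ g t := by
      intro t ht
      rw [Set.mem_Ioi] at ht
      have ht0 : (0:ℝ) < t := hb0.trans ht
      have hlt : 0 < l t := hl_pos t ht0
      have hrp : (0:ℝ) < t ^ (-α) := Real.rpow_pos_of_pos ht0 _
      have hexparg : -c * b ^ 2 / t = -(c * b ^ 2 / t) := by ring
      rcases le_or_gt t (b ^ 2) with hcase | hcase
      · -- middle range
        have hmem : t ∈ Set.Ioc b (b ^ 2) := ⟨ht, hcase⟩
        have hnmem : t ∉ Set.Ioi (b ^ 2) := by simp [Set.mem_Ioi]; exact hcase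
        rw [hg]
        simp only [Set.indicator_of_mem hmem, Set.indicator_of_notMem hnmem, zero_add]
        have hz : (0:ℝ) < c * b ^ 2 / t := by positivity
        have hexp : Real.exp (-c * b ^ 2 / t) ≤ (n.factorial : ℝ) / (c * b ^ 2 / t) ^ n := by
          rw [hexparg]; exact aux_exp_neg_le n hz
        have hld : l t ≤ 2 * (b ^ 2 / t) * l (b ^ 2) := hdown t (by linarith) hcase
        have step1 : v t * Real.exp (-c * b ^ 2 / t)
            ≤ (t ^ (-α) * (2 * (b ^ 2 / t) * l (b ^ 2))) * ((n.factorial : ℝ) / (c * b ^ 2 / t) ^ n) := by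
          rw [hv]
          apply mul_le_mul
          · exact mul_le_mul_of_nonneg_left hld hrp.le
          · exact hexp
          · exact Real.exp_nonneg _
          · positivity
        refine step1.trans (le_of_eq ?_)
        rw [hA2]
        have hsplit : t ^ ((n:ℝ) - α - 1) = t ^ (n:ℕ) * t ^ (-α) * t⁻¹ := by
          rw [show (n:ℝ) - α - 1 = (n:ℝ) + (-α) + (-1) by ring,
            Real.rpow_add ht0, Real.rpow_add ht0, Real.rpow_natCast, Real.rpow_neg_one]
        rw [hsplit]
        have hcb : c * b ^ 2 / t ≠ 0 := by positivity
        field_simp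
        have htn : t ^ n * t⁻¹ ^ n = 1 := by rw [← mul_pow, mul_inv_cancel₀ ht0.ne', one_pow]
        linear_combination (-(c ^ n * b ^ (n * 2))) * htn
      · -- far range
        have hmem : t ∈ Set.Ioi (b ^ 2) := hcase
        have hnmem : t ∉ Set.Ioc b (b ^ 2) := by
          simp only [Set.mem_Ioc, not_and, not_le]; intro _; exact hcase
        rw [hg]
        simp only [Set.indicator_of_mem hmem, Set.indicator_of_notMem hnmem, add_zero]
        have hexp : Real.exp (-c * b ^ 2 / t) ≤ 1 := by
          rw [Real.exp_le_one_iff]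
          have : (0:ℝ) ≤ c * b ^ 2 / t := by positivity
          linarith [hexparg ▸ neg_nonpos.mpr this]
        have hlu : l t ≤ 2 * (t / b ^ 2) * l (b ^ 2) := hup t hcase.le
        have step1 : v t * Real.exp (-c * b ^ 2 / t)
            ≤ (t ^ (-α) * (2 * (t / b ^ 2) * l (b ^ 2))) * 1 := by
          rw [hv]
          apply mul_le_mul
          · exact mul_le_mul_of_nonneg_left hlu hrp.le
          · exact hexp
          · exact Real.exp_nonneg _
          · positivity
        refine step1.trans (le_of_eq ?_)
        rw [hA1]
        have hsplit : t ^ (1 - α) = t * t ^ (-α) := by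
          rw [show (1:ℝ) - α = 1 + (-α) by ring, Real.rpow_add ht0, Real.rpow_one]
        rw [hsplit]
        field_simp
    have hnonneg : ∀ t ∈ Set.Ioi b, 0 ≤ v t * Real.exp (-c * b ^ 2 / t) := by
      intro t ht
      rw [Set.mem_Ioi] at ht
      have ht0 : (0:ℝ) < t := hb0.trans ht
      rw [hv]
      have := (hl_pos t ht0).le
      positivity
    -- integrability of g
    have hint1 : Integrable ((Set.Ioi (b ^ 2)).indicator (fun t : ℝ => A1 * t ^ (1 - α)))
        (volume.restrict (Set.Ioi b)) := by
      have hio : IntegrableOn (fun t : ℝ => A1 * t ^ (1 - α)) (Set.Ioi (b ^ 2)) :=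
        (integrableOn_Ioi_rpow_of_lt (by linarith) hb20).const_mul A1
      exact (hio.integrable_indicator measurableSet_Ioi).restrict
    have hint2 : Integrable ((Set.Ioc b (b ^ 2)).indicator (fun t : ℝ => A2 * t ^ ((n:ℝ) - α - 1)))
        (volume.restrict (Set.Ioi b)) := by
      have hcont : ContinuousOn (fun t : ℝ => A2 * t ^ ((n:ℝ) - α - 1)) (Set.Icc b (b ^ 2)) :=
        continuousOn_const.mul (continuousOn_id.rpow_const
          (fun t ht => Or.inl (ne_of_gt (hb0.trans_le ht.1))))
      have hio : IntegrableOn (fun t : ℝ => A2 * t ^ ((n:ℝ) - α - 1)) (Set.Ioc b (b ^ 2)) :=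
        (hcont.integrableOn_Icc).mono_set Set.Ioc_subset_Icc_self
      exact (hio.integrable_indicator measurableSet_Ioc).restrict
    have hgint : Integrable g (volume.restrict (Set.Ioi b)) := by
      rw [hg]; exact hint1.add hint2
    have hmono : (∫ t in Set.Ioi b, v t * Real.exp (-c * b ^ 2 / t)) ≤ ∫ t in Set.Ioi b, g t :=
      integral_mono_of_nonneg
        ((ae_restrict_iff' measurableSet_Ioi).mpr (Filter.Eventually.of_forall hnonneg))
        hgint
        ((ae_restrict_iff' measurableSet_Ioi).mpr (Filter.Eventually.of_forall hfg))
    -- compute/estimate ∫ g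
    have hβ : (0:ℝ) ≤ (n:ℝ) - α - 1 := by linarith
    have hsplitg : (∫ t in Set.Ioi b, g t)
        = (∫ t in Set.Ioi b, (Set.Ioi (b ^ 2)).indicator (fun t : ℝ => A1 * t ^ (1 - α)) t)
          + ∫ t in Set.Ioi b, (Set.Ioc b (b ^ 2)).indicator (fun t : ℝ => A2 * t ^ ((n:ℝ) - α - 1)) t := by
      rw [hg]; exact integral_add hint1 hint2
    have hval1 : (∫ t in Set.Ioi b, (Set.Ioi (b ^ 2)).indicator (fun t : ℝ => A1 * t ^ (1 - α)) t)
        = A1 * ((b ^ 2) ^ (2 - α) / (α - 2)) := by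
      rw [setIntegral_indicator measurableSet_Ioi]
      rw [Set.Ioi_inter_Ioi, sup_eq_right.mpr hbb2.le]
      rw [MeasureTheory.integral_const_mul]
      rw [integral_Ioi_rpow_of_lt (by linarith) hb20]
      rw [show (1:ℝ) - α + 1 = 2 - α by ring]
      have hne : α - 2 ≠ 0 := by linarith
      have hne2 : (2:ℝ) - α ≠ 0 := by linarith
      field_simp
      ring
    have hval2 : (∫ t in Set.Ioi b, (Set.Ioc b (b ^ 2)).indicator (fun t : ℝ => A2 * t ^ ((n:ℝ) - α - 1)) t)
        ≤ b ^ 2 * (A2 * (b ^ 2) ^ ((n:ℝ) - α - 1)) := by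
      rw [setIntegral_indicator measurableSet_Ioc]
      rw [Set.inter_eq_right.mpr Set.Ioc_subset_Ioi_self]
      have hio : IntegrableOn (fun t : ℝ => A2 * t ^ ((n:ℝ) - α - 1)) (Set.Ioc b (b ^ 2)) := by
        have hcont : ContinuousOn (fun t : ℝ => A2 * t ^ ((n:ℝ) - α - 1)) (Set.Icc b (b ^ 2)) :=
          continuousOn_const.mul (continuousOn_id.rpow_const
            (fun t ht => Or.inl (ne_of_gt (hb0.trans_le ht.1))))
        exact (hcont.integrableOn_Icc).mono_set Set.Ioc_subset_Icc_self
      have hconst : IntegrableOn (fun _ : ℝ => A2 * (b ^ 2) ^ ((n:ℝ) - α - 1)) (Set.Ioc b (b ^ 2)) :=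
        integrableOn_const (by rw [Real.volume_Ioc]; exact ENNReal.ofReal_ne_top)
      have hmono2 := setIntegral_mono_on hio hconst measurableSet_Ioc
        (fun t ht => mul_le_mul_of_nonneg_left
          (Real.rpow_le_rpow (le_of_lt (hb0.trans ht.1)) ht.2 hβ) hA2pos.le)
      rw [setIntegral_const, Real.volume_real_Ioc_of_le (by linarith), smul_eq_mul] at hmono2
      refine hmono2.trans ?_
      have : (0:ℝ) ≤ A2 * (b ^ 2) ^ ((n:ℝ) - α - 1) := by positivity
      nlinarith
    -- final arithmetic
    have hB2α : ((b:ℝ) ^ 2) ^ (2 - α) = ((b ^ 2) ^ (2:ℕ)) * (b ^ 2) ^ (-α) := by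
      rw [show (2:ℝ) - α = ((2:ℕ):ℝ) + (-α) by push_cast; ring,
        Real.rpow_add hb20, Real.rpow_natCast]
    have hBβ : ((b:ℝ) ^ 2) ^ ((n:ℝ) - α - 1) = ((b ^ 2) ^ (n:ℕ)) * (b ^ 2) ^ (-α) * (b ^ 2)⁻¹ := by
      rw [show (n:ℝ) - α - 1 = (n:ℝ) + (-α) + (-1) by ring,
        Real.rpow_add hb20, Real.rpow_add hb20, Real.rpow_natCast, Real.rpow_neg_one]
    have hfinal : A1 * ((b ^ 2) ^ (2 - α) / (α - 2)) + b ^ 2 * (A2 * (b ^ 2) ^ ((n:ℝ) - α - 1))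
        = C * b ^ 2 * v (b ^ 2) := by
      rw [hv, hB2α, hBβ, hA1, hA2, hC]
      have hne : α - 2 ≠ 0 := by linarith
      have hcn : c ^ n ≠ 0 := by positivity
      have hbn : ((b:ℝ) ^ 2) ^ (n:ℕ) ≠ 0 := by positivity
      field_simp
    calc (∫ t in Set.Ioi b, v t * Real.exp (-c * b ^ 2 / t))
        ≤ ∫ t in Set.Ioi b, g t := hmono
      _ = _ + _ := hsplitg
      _ ≤ A1 * ((b ^ 2) ^ (2 - α) / (α - 2)) + b ^ 2 * (A2 * (b ^ 2) ^ ((n:ℝ) - α - 1)) := by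
          rw [hval1]; exact add_le_add_right hval2 _
      _ = C * b ^ 2 * v (b ^ 2) := hfinal
  · -- non-measurable case
    push_neg at H
    refine ⟨1, one_pos, 1, one_pos, fun b hb => ?_⟩
    have hb0 : (0:ℝ) < b := by linarith
    have hns : ¬ AEStronglyMeasurable (fun t => v t * Real.exp (-c * b ^ 2 / t))
        (volume.restrict (Set.Ioi b)) := by
      intro hAS
      have hcont : AEMeasurable (fun t : ℝ => t ^ α * Real.exp (c * b ^ 2 / t))
          (volume.restrict (Set.Ioi b)) := by
        apply ContinuousOn.aemeasurable ?_ measurableSet_Ioi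
        apply ContinuousOn.mul
        · exact continuousOn_id.rpow_const (fun t ht => Or.inl (ne_of_gt (hb0.trans ht)))
        · exact Real.continuous_exp.comp_continuousOn
            (continuousOn_const.div continuousOn_id (fun t ht => ne_of_gt (hb0.trans ht)))
      have hprod : AEMeasurable
          (fun t => (v t * Real.exp (-c * b ^ 2 / t)) * (t ^ α * Real.exp (c * b ^ 2 / t)))
          (volume.restrict (Set.Ioi b)) := hAS.aemeasurable.mul hcont
      have heq : ∀ᵐ t ∂(volume.restrict (Set.Ioi b)),
          (v t * Real.exp (-c * b ^ 2 / t)) * (t ^ α * Real.exp (c * b ^ 2 / t)) = l t := by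
        refine (ae_restrict_iff' measurableSet_Ioi).mpr (Filter.Eventually.of_forall fun t ht => ?_)
        rw [Set.mem_Ioi] at ht
        have ht0 : (0:ℝ) < t := hb0.trans ht
        rw [hv t]
        have h1 : t ^ (-α) * t ^ α = 1 := by
          rw [← Real.rpow_add ht0]; norm_num
        have h2 : Real.exp (-c * b ^ 2 / t) * Real.exp (c * b ^ 2 / t) = 1 := by
          rw [← Real.exp_add, show -c * b ^ 2 / t + c * b ^ 2 / t = 0 by ring, Real.exp_zero]
        calc (t ^ (-α) * l t * Real.exp (-c * b ^ 2 / t)) * (t ^ α * Real.exp (c * b ^ 2 / t))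
            = (t ^ (-α) * t ^ α) * (Real.exp (-c * b ^ 2 / t) * Real.exp (c * b ^ 2 / t)) * l t := by
              ring
          _ = l t := by rw [h1, h2]; ring
      exact (H b hb0) (hprod.congr heq)
    rw [integral_non_aestronglyMeasurable hns]
    have hvpos : 0 < v (b ^ 2) := by
      rw [hv]
      exact mul_pos (Real.rpow_pos_of_pos (by positivity) _) (hl_pos _ (by positivity))
    nlinarith
end

section
/- Let V, T be independent nonnegative random variables with P(V > x) = x^{−α}·L(x) for α > 1 and L slowly varying, and P(T > x) = o(P(V > x)). Then P(V − T > x) ∼ P(V > x) as x → ∞. -/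
open Filter MeasureTheory ProbabilityTheory Real Set

/-- If `V, T` are independent nonnegative random variables, `V` has regularly
varying right tail `P(V > x) = x^{−α} L(x)` with `α > 1` and `L` slowly varying,
and `P(T > x) = o(P(V > x))`, then `P(V − T > x) ∼ P(V > x)` as `x → ∞`. -/
theorem stmt7 {Ω : Type*} [MeasurableSpace Ω] (P : Measure Ω) [IsProbabilityMeasure P]
    (V T : Ω → ℝ) (hV : Measurable V) (hT : Measurable T)
    (hVpos : ∀ ω, 0 ≤ V ω) (hTpos : ∀ ω, 0 ≤ T ω)
    (hindep : IndepFun V T P)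
    (α : ℝ) (hα : 1 < α) (L : ℝ → ℝ)
    (hL_slow : ∀ t > 0, Tendsto (fun x => L (t * x) / L x) atTop (nhds 1))
    (htail : ∀ x > 0, (P {ω | V ω > x}).toReal = x ^ (-α) * L x)
    (hTtail : Tendsto
      (fun x => (P {ω | T ω > x}).toReal / (P {ω | V ω > x}).toReal)
      atTop (nhds 0)) :
    Tendsto
      (fun x => (P {ω | V ω - T ω > x}).toReal / (P {ω | V ω > x}).toReal)
      atTop (nhds 1) := by
  set d : ℝ → ℝ := fun x => (P {ω | V ω > x}).toReal with hd
  -- eventual positivity of L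
  have hLpos : ∀ᶠ x in atTop, 0 < L x := by
    have h2 := (hL_slow 2 two_pos).eventually
      (eventually_gt_nhds (show (0:ℝ) < 1 by norm_num))
    filter_upwards [h2, eventually_gt_atTop 0] with x hx hx0
    have hne : L x ≠ 0 := by
      intro h; rw [h, div_zero] at hx; exact lt_irrefl 0 hx
    have hnn : 0 ≤ L x := by
      have hdx : 0 ≤ d x := ENNReal.toReal_nonneg
      rw [hd] at hdx
      simp only at hdx
      rw [htail x hx0] at hdx
      have : (0:ℝ) < x ^ (-α) := rpow_pos_of_pos hx0 _
      nlinarith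
    exact lt_of_le_of_ne hnn (Ne.symm hne)
  have hdpos : ∀ᶠ x in atTop, 0 < d x := by
    filter_upwards [hLpos, eventually_gt_atTop 0] with x hL hx0
    rw [hd]; simp only
    rw [htail x hx0]
    exact mul_pos (rpow_pos_of_pos hx0 _) hL
  -- ratio d(t x)/d(x) → t^{-α}
  have hratio : ∀ t > 0, Tendsto (fun x => d (t*x) / d x) atTop (nhds (t ^ (-α))) := by
    intro t ht
    have key : (fun x => d (t*x) / d x) =ᶠ[atTop]
        fun x => t ^ (-α) * (L (t*x) / L x) := by
      filter_upwards [eventually_gt_atTop 0, hLpos] with x hx0 hLx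
      have htx : 0 < t * x := mul_pos ht hx0
      rw [hd]; simp only
      rw [htail _ htx, htail _ hx0, Real.mul_rpow ht.le hx0.le]
      have h1 : x ^ (-α) ≠ 0 := (rpow_pos_of_pos hx0 _).ne'
      field_simp
    rw [tendsto_congr' key]
    have := (hL_slow t ht).const_mul (t ^ (-α))
    simpa using this
  -- tail of T over d x tends to 0
  have hTsmall : ∀ δ > 0, Tendsto
      (fun x => (P {ω | T ω > δ * x}).toReal / d x) atTop (nhds 0) := by
    intro δ hδ
    have hcomp : Tendsto (fun x : ℝ => δ * x) atTop atTop :=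
      Tendsto.const_mul_atTop hδ tendsto_id
    have h1 : Tendsto
        (fun x => (P {ω | T ω > δ * x}).toReal / d (δ * x) * (d (δ * x) / d x))
        atTop (nhds (0 * δ ^ (-α))) :=
      (hTtail.comp hcomp).mul (hratio δ hδ)
    rw [zero_mul] at h1
    apply h1.congr'
    filter_upwards [hcomp.eventually hdpos, hdpos] with x h2 h3
    field_simp
  -- lower bound on P(V - T > x)
  have hlow : ∀ δ : ℝ, ∀ x : ℝ,
      d ((1+δ)*x) - (P {ω | T ω > δ*x}).toReal ≤ (P {ω | V ω - T ω > x}).toReal := by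
    intro δ x
    set A := {ω | V ω > (1+δ)*x} with hA
    set B := {ω | T ω > δ*x} with hB
    have hsub : A \ B ⊆ {ω | V ω - T ω > x} := by
      rintro ω ⟨h1, h2⟩
      simp only [hA, hB, mem_setOf_eq, not_lt, gt_iff_lt] at *
      linarith
    have h1 : P A ≤ P {ω | V ω - T ω > x} + P B := by
      calc P A ≤ P (A \ B ∪ B) := measure_mono (Set.subset_diff_union A B)
      _ ≤ P (A \ B) + P B := measure_union_le _ _
      _ ≤ _ := add_le_add (measure_mono hsub) le_rfl
    have h2 := ENNReal.toReal_mono (by finiteness) h1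
    rw [ENNReal.toReal_add (by finiteness) (by finiteness)] at h2
    rw [hd]; simp only
    linarith
  -- upper bound
  have hupper : ∀ x, (P {ω | V ω - T ω > x}).toReal ≤ d x := by
    intro x
    apply ENNReal.toReal_mono (measure_ne_top _ _)
    apply measure_mono
    intro ω h
    simp only [mem_setOf_eq, gt_iff_lt] at *
    have := hTpos ω
    linarith
  -- conclude
  rw [Metric.tendsto_nhds]
  intro ε hε
  obtain ⟨δ, hδpos, hδ⟩ : ∃ δ > 0, 1 - ε/2 < (1+δ:ℝ) ^ (-α) := by
    have hc : ContinuousAt (fun s : ℝ => s ^ (-α)) 1 :=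
      Real.continuousAt_rpow_const 1 (-α) (Or.inl one_ne_zero)
    have hc2 := hc.tendsto
    rw [Real.one_rpow] at hc2
    have hev := hc2.eventually (eventually_gt_nhds (show 1 - ε/2 < (1:ℝ) by linarith))
    rw [Metric.eventually_nhds_iff] at hev
    obtain ⟨r, hr, h⟩ := hev
    refine ⟨r/2, by linarith, h ?_⟩
    rw [Real.dist_eq, abs_of_pos] <;> linarith
  have hg : Tendsto
      (fun x => d ((1+δ)*x) / d x - (P {ω | T ω > δ*x}).toReal / d x)
      atTop (nhds ((1+δ) ^ (-α) - 0)) :=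
    (hratio _ (by linarith)).sub (hTsmall δ hδpos)
  rw [sub_zero] at hg
  have hev2 := hg.eventually (eventually_gt_nhds (show 1 - ε < (1+δ:ℝ) ^ (-α) by linarith))
  filter_upwards [hev2, hdpos] with x h1 h3
  rw [Real.dist_eq, abs_lt]
  constructor
  · have hstep : (d ((1+δ)*x) - (P {ω | T ω > δ*x}).toReal) / d x
        ≤ (P {ω | V ω - T ω > x}).toReal / d x := by
      gcongr
      exact hlow δ x
    rw [sub_div] at hstep
    linarith
  · have : (P {ω | V ω - T ω > x}).toReal / d x ≤ 1 :=
      (div_le_one h3).mpr (hupper x)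
    linarith
end

section
/- Consider the Kiefer–Wolfowitz recursion: W_{n+1}^{(1)} = min((W_n^{(1)} + V_n − T_{n+1})^+, (W_n^{(2)} − T_{n+1})^+) and W_{n+1}^{(2)} = max((W_n^{(1)} + V_n − T_{n+1})^+, (W_n^{(2)} − T_{n+1})^+), where (V_n, T_{n+1}) are i.i.d. with V, T ≥ 0 independent, E[V] = E[T] = 1, and E[T·1(T > C)] → 0 as C → ∞. Then there exist positive constants C and ε such that for every initial state (w_1, w_2) with 0 ≤ w_1 ≤ w_2 and w_2 ≥ C, E[W_1^{(1)} + W_1^{(2)} | W_0 = (w_1,w_2)] < (w_1 + w_2) − ε. -/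
open Filter MeasureTheory ProbabilityTheory Real

lemma pos_part_eq_sub_min (a t : ℝ) (ha : 0 ≤ a) : max (a - t) 0 = a - min t a := by
  rcases le_total t a with h | h
  · rw [min_eq_left h, max_eq_left (by linarith)]
  · rw [min_eq_right h, max_eq_right (by linarith)]
    ring

/-- One-step drift for the Kiefer–Wolfowitz recursion at `ρ = 1`: if `V, T ≥ 0`
are independent and integrable with `E V = E T = 1` and `P(T > 0) > 0`
(`E[T·1(T>C)] → 0` as `C → ∞`, which holds by integrability), then there exist
`C, ε > 0` such that for every state `(w₁, w₂)` with `0 ≤ w₁ ≤ w₂` and `w₂ ≥ C`,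
`E[W₁⁽¹⁾ + W₁⁽²⁾] < (w₁ + w₂) − ε`, where
`W₁⁽¹⁾ = min((w₁+V−T)⁺, (w₂−T)⁺)` and `W₁⁽²⁾ = max((w₁+V−T)⁺, (w₂−T)⁺)`. -/
theorem stmt8 {Ω : Type*} [MeasurableSpace Ω] (P : Measure Ω) [IsProbabilityMeasure P]
    (V T : Ω → ℝ) (hVm : Measurable V) (hTm : Measurable T)
    (hVpos : ∀ ω, 0 ≤ V ω) (hTpos : ∀ ω, 0 ≤ T ω)
    (hindep : IndepFun V T P)
    (hVint : Integrable V P) (hTint : Integrable T P)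
    (hEV : ∫ ω, V ω ∂P = 1) (hET : ∫ ω, T ω ∂P = 1)
    (hT0 : 0 < (P {ω | 0 < T ω}).toReal)
    (hTtrunc : Tendsto (fun C : ℝ => ∫ ω in {ω | T ω > C}, T ω ∂P) atTop (nhds 0)) :
    ∃ C > 0, ∃ ε > 0, ∀ w₁ w₂ : ℝ, 0 ≤ w₁ → w₁ ≤ w₂ → C ≤ w₂ →
      (∫ ω, (min (max (w₁ + V ω - T ω) 0) (max (w₂ - T ω) 0) +
             max (max (w₁ + V ω - T ω) 0) (max (w₂ - T ω) 0)) ∂P)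
        < (w₁ + w₂) - ε := by
  -- the function g = min(T, V) and its positive mean δ
  set g : Ω → ℝ := fun ω => min (T ω) (V ω) with hg
  have hgm : Measurable g := hTm.min hVm
  have hgnn : ∀ ω, 0 ≤ g ω := fun ω => le_min (hTpos ω) (hVpos ω)
  have hgint : Integrable g P := by
    refine hTint.mono hgm.aestronglyMeasurable (ae_of_all _ fun ω => ?_)
    rw [Real.norm_eq_abs, Real.norm_eq_abs, abs_of_nonneg (hgnn ω),
      abs_of_nonneg (hTpos ω)]
    exact min_le_left _ _
  -- P(V > 0) > 0
  have hV0 : 0 < P {ω | 0 < V ω} := by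
    have h1 : 0 < ∫ ω, V ω ∂P := by rw [hEV]; norm_num
    have := (integral_pos_iff_support_of_nonneg hVpos hVint).mp h1
    have hsupp : Function.support V = {ω | 0 < V ω} := by
      ext ω
      simp only [Function.mem_support, Set.mem_setOf_eq]
      constructor
      · intro h; exact lt_of_le_of_ne (hVpos ω) (Ne.symm h)
      · intro h; exact ne_of_gt h
    rwa [hsupp] at this
  have hT0' : 0 < P {ω | 0 < T ω} := by
    by_contra h
    push_neg at h
    have : P {ω | 0 < T ω} = 0 := le_antisymm h zero_le
    rw [this] at hT0
    simp at hT0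
  -- positivity of δ
  have hδpos : 0 < ∫ ω, g ω ∂P := by
    rw [integral_pos_iff_support_of_nonneg hgnn hgint]
    have hA : {ω | 0 < V ω} ∩ {ω | 0 < T ω} ⊆ Function.support g := by
      intro ω hω
      simp only [Set.mem_inter_iff, Set.mem_setOf_eq] at hω
      simp only [Function.mem_support, hg]
      exact ne_of_gt (lt_min hω.2 hω.1)
    have hmul : P ({ω | 0 < V ω} ∩ {ω | 0 < T ω})
        = P {ω | 0 < V ω} * P {ω | 0 < T ω} := by
      have := hindep.measure_inter_preimage_eq_mul (Set.Ioi 0) (Set.Ioi 0)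
        measurableSet_Ioi measurableSet_Ioi
      simpa [Set.preimage, Set.mem_Ioi] using this
    have : 0 < P ({ω | 0 < V ω} ∩ {ω | 0 < T ω}) := by
      rw [hmul]
      exact ENNReal.mul_pos (ne_of_gt hV0) (ne_of_gt hT0')
    exact lt_of_lt_of_le this (measure_mono hA)
  set δ := ∫ ω, g ω ∂P with hδ
  -- choose C with small tail and C ≥ 1
  have htail : ∀ᶠ C in atTop, (∫ ω in {ω | T ω > C}, T ω ∂P) < δ / 4 :=
    hTtrunc.eventually (gt_mem_nhds (by positivity))
  obtain ⟨C, hCtail, hC1⟩ := (htail.and (eventually_ge_atTop (1 : ℝ))).exists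
  have hC0 : (0 : ℝ) < C := lt_of_lt_of_le one_pos hC1
  -- integrability of min(T, C)
  have hminCint : Integrable (fun ω => min (T ω) C) P := by
    refine hTint.mono (hTm.min measurable_const).aestronglyMeasurable
      (ae_of_all _ fun ω => ?_)
    rw [Real.norm_eq_abs, Real.norm_eq_abs,
      abs_of_nonneg (le_min (hTpos ω) (le_of_lt hC0)), abs_of_nonneg (hTpos ω)]
    exact min_le_left _ _
  -- E[min(T,C)] ≥ 1 - δ/4
  have hminC : (1 : ℝ) - δ / 4 ≤ ∫ ω, min (T ω) C ∂P := by
    have hsm : MeasurableSet {ω | T ω > C} := measurableSet_lt measurable_const hTm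
    have hindint : Integrable ({ω | T ω > C}.indicator T) P := hTint.indicator hsm
    have hdiff : ∫ ω, (T ω - min (T ω) C) ∂P
        ≤ ∫ ω, ({ω | T ω > C}.indicator T) ω ∂P := by
      refine integral_mono (hTint.sub hminCint) hindint fun ω => ?_
      by_cases h : T ω > C
      · rw [Set.indicator_of_mem (show ω ∈ {ω | T ω > C} from h)]
        have : min (T ω) C = C := min_eq_right (le_of_lt h)
        rw [this]
        linarith [le_of_lt hC0]
      · rw [Set.indicator_of_notMem (show ω ∉ {ω | T ω > C} from h)]
        push_neg at h
        rw [min_eq_left h]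
        simp
    rw [integral_indicator hsm] at hdiff
    have hsub : ∫ ω, (T ω - min (T ω) C) ∂P
        = 1 - ∫ ω, min (T ω) C ∂P := by
      rw [integral_sub hTint hminCint, hET]
    rw [hsub] at hdiff
    linarith [hCtail]
  refine ⟨C, hC0, δ / 4, by positivity, fun w₁ w₂ hw₁ hw12 hCw₂ => ?_⟩
  have hw₂0 : (0 : ℝ) ≤ w₂ := le_trans (le_of_lt hC0) hCw₂
  -- pointwise identity and bound
  have hbound : ∀ ω, min (max (w₁ + V ω - T ω) 0) (max (w₂ - T ω) 0) +
             max (max (w₁ + V ω - T ω) 0) (max (w₂ - T ω) 0)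
      ≤ (w₁ + w₂) + V ω - g ω - min (T ω) C := by
    intro ω
    rw [min_add_max, pos_part_eq_sub_min _ _ (by linarith [hVpos ω]),
      pos_part_eq_sub_min _ _ hw₂0]
    have h1 : g ω ≤ min (T ω) (w₁ + V ω) :=
      le_min (min_le_left _ _) (le_trans (min_le_right _ _) (by linarith))
    have h2 : min (T ω) C ≤ min (T ω) w₂ :=
      le_min (min_le_left _ _) (le_trans (min_le_right _ _) hCw₂)
    linarith
  -- integrability of the LHS
  have hmax1 : Integrable (fun ω => max (w₁ + V ω - T ω) 0) P := by
    refine (((integrable_const w₁).add hVint).add (integrable_const 0)).mono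
      ((((measurable_const.add hVm).sub hTm).max measurable_const).aestronglyMeasurable)
      (ae_of_all _ fun ω => ?_)
    rw [Real.norm_eq_abs, Real.norm_eq_abs, abs_of_nonneg (le_max_right _ _)]
    have : max (w₁ + V ω - T ω) 0 ≤ w₁ + V ω := by
      apply max_le (by linarith [hTpos ω]) (by linarith [hVpos ω])
    calc max (w₁ + V ω - T ω) 0 ≤ w₁ + V ω := this
      _ ≤ |w₁ + V ω + 0| := by rw [add_zero]; exact le_abs_self _
  have hmax2 : Integrable (fun ω => max (w₂ - T ω) 0) P := by
    refine (integrable_const w₂).mono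
      (((measurable_const.sub hTm).max measurable_const).aestronglyMeasurable)
      (ae_of_all _ fun ω => ?_)
    rw [Real.norm_eq_abs, Real.norm_eq_abs, abs_of_nonneg (le_max_right _ _),
      abs_of_nonneg hw₂0]
    exact max_le (by linarith [hTpos ω]) hw₂0
  have hLint : Integrable (fun ω => min (max (w₁ + V ω - T ω) 0) (max (w₂ - T ω) 0) +
             max (max (w₁ + V ω - T ω) 0) (max (w₂ - T ω) 0)) P := by
    have : (fun ω => min (max (w₁ + V ω - T ω) 0) (max (w₂ - T ω) 0) +
             max (max (w₁ + V ω - T ω) 0) (max (w₂ - T ω) 0))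
        = fun ω => max (w₁ + V ω - T ω) 0 + max (w₂ - T ω) 0 := by
      funext ω; rw [min_add_max]
    rw [this]
    exact hmax1.add hmax2
  have hRint : Integrable (fun ω => (w₁ + w₂) + V ω - g ω - min (T ω) C) P :=
    (((integrable_const (w₁ + w₂)).add hVint).sub hgint).sub hminCint
  have hInt : (∫ ω, (min (max (w₁ + V ω - T ω) 0) (max (w₂ - T ω) 0) +
             max (max (w₁ + V ω - T ω) 0) (max (w₂ - T ω) 0)) ∂P)
      ≤ ∫ ω, ((w₁ + w₂) + V ω - g ω - min (T ω) C) ∂P :=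
    integral_mono hLint hRint hbound
  have hA1 : Integrable (fun ω => (w₁ + w₂) + V ω) P := by
    exact (integrable_const _).add hVint
  have hA2 : Integrable (fun ω => (w₁ + w₂) + V ω - g ω) P := hA1.sub hgint
  have hRval : ∫ ω, ((w₁ + w₂) + V ω - g ω - min (T ω) C) ∂P
      = (w₁ + w₂) + 1 - δ - ∫ ω, min (T ω) C ∂P := by
    rw [integral_sub hA2 hminCint, integral_sub hA1 hgint,
      integral_add (integrable_const (w₁ + w₂)) hVint, hEV, integral_const]
    simp [hδ]
  rw [hRval] at hInt
  linarith
end
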